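/- Every closed additive subgroup H of ℂ ≅ ℝ² is one of: {0}, an infinite cyclic group ℤ·b with b ≠ 0, a line ℝ·b, a set of the form ℤ·b₁ + ℤ·b₂ with b₁, b₂ ℝ-linearly independent (a lattice), ℝ·b₁ + ℤ·b₂ with b₁,b₂ independent, or all of ℂ. In particular, if H is discrete then H = {0}, H = ℤ·b, or H is a lattice ℤ·b₁ + ℤ·b₂ with b₁, b₂ ℝ-linearly independent. -/
import Mathlib

open Filter Topology Complex Submodule Module


lemma small_elts (H : AddSubgroup ℂ) (hd : ¬ DiscreteTopology H) :
    ∀ ε > (0:ℝ), ∃ x ∈ H, x ≠ 0 ∧ ‖x‖ < ε := by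
  by_contra hc
  push_neg at hc
  obtain ⟨ε, hε, hb⟩ := hc
  apply hd
  apply discreteTopology_of_isOpen_singleton_zero
  have h0 : ({0} : Set H) = (Subtype.val ⁻¹' Metric.ball (0:ℂ) ε) := by
    ext ⟨x, hx⟩
    simp only [Set.mem_singleton_iff, Set.mem_preimage, Metric.mem_ball, dist_zero_right]
    constructor
    · intro hxe
      have : x = 0 := by simpa [Subtype.ext_iff] using hxe
      subst this; simpa using hε
    · intro h
      by_contra hne
      have hxne : x ≠ 0 := by simpa [Subtype.ext_iff] using hne
      exact absurd h (not_lt.2 (hb x hx hxne))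
  rw [h0]
  exact (Metric.isOpen_ball).preimage continuous_subtype_val

lemma line_mem (H : AddSubgroup ℂ) (hH : IsClosed (H : Set ℂ))
    (h : ∀ ε > (0:ℝ), ∃ x ∈ H, x ≠ 0 ∧ ‖x‖ < ε) :
    ∃ u : ℂ, u ≠ 0 ∧ ∀ t : ℝ, t • u ∈ H := by
  have hx : ∀ n : ℕ, ∃ x : ℂ, x ∈ H ∧ x ≠ 0 ∧ ‖x‖ < 1/(n+1) := by
    intro n
    obtain ⟨x, h1, h2, h3⟩ := h (1/(n+1)) (by positivity)
    exact ⟨x, h1, h2, h3⟩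
  choose x hxH hx0 hxn using hx
  set u : ℕ → ℂ := fun n => ‖x n‖⁻¹ • x n with hu
  have hun : ∀ n, ‖u n‖ = 1 := by
    intro n
    rw [hu]
    dsimp only
    rw [norm_smul, Real.norm_eq_abs, abs_inv, abs_norm,
      inv_mul_cancel₀ (norm_ne_zero_iff.2 (hx0 n))]
  have hus : ∀ n, u n ∈ Metric.sphere (0:ℂ) 1 := fun n =>
    mem_sphere_zero_iff_norm.2 (hun n)
  obtain ⟨v, hv, φ, hφ, hvt⟩ := (isCompact_sphere (0:ℂ) 1).tendsto_subseq hus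
  refine ⟨v, ?_, ?_⟩
  · intro h0
    rw [h0] at hv
    simp at hv
  intro t
  set r : ℕ → ℝ := fun n => ‖x (φ n)‖ with hr
  have hr0 : ∀ n, 0 < r n := fun n => norm_pos_iff.2 (hx0 _)
  have hrlim : Tendsto r atTop (nhds 0) := by
    refine squeeze_zero (fun n => (hr0 n).le) (fun n => ?_)
      tendsto_one_div_add_atTop_nhds_zero_nat
    calc r n ≤ 1/(φ n + 1) := (hxn _).le
      _ ≤ 1/(n+1) := by
          apply one_div_le_one_div_of_le (by positivity)
          have : (n:ℝ) ≤ (φ n : ℝ) := by exact_mod_cast hφ.le_apply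
          linarith
  set y : ℕ → ℂ := fun n => (⌊t / r n⌋ : ℤ) • x (φ n) with hy
  have hyH : ∀ n, y n ∈ H := fun n => zsmul_mem (hxH _) _
  have hconv : Tendsto y atTop (nhds (t • v)) := by
    rw [tendsto_iff_norm_sub_tendsto_zero]
    have hlim2 : Tendsto (fun n => r n + |t| * ‖u (φ n) - v‖) atTop (nhds 0) := by
      have h2 : Tendsto (fun n => ‖u (φ n) - v‖) atTop (nhds 0) := by
        rw [← tendsto_iff_norm_sub_tendsto_zero] at *
        exact hvt
      have := hrlim.add (h2.const_mul |t|)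
      simpa using this
    refine squeeze_zero (fun n => norm_nonneg _) (fun n => ?_) hlim2
    have hxu : (r n) • u (φ n) = x (φ n) := by
      rw [hu]
      dsimp only
      rw [smul_smul, hr]
      dsimp only
      rw [mul_inv_cancel₀ (norm_ne_zero_iff.2 (hx0 (φ n))), one_smul]
    have hid : y n - t • v = ((⌊t / r n⌋ * r n - t : ℝ)) • u (φ n) + t • (u (φ n) - v) := by
      rw [hy]
      dsimp only
      rw [← hxu, ← Int.cast_smul_eq_zsmul ℝ]
      module
    rw [hid]
    refine (norm_add_le _ _).trans ?_
    gcongr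
    · rw [norm_smul, Real.norm_eq_abs, hun, mul_one, abs_le]
      have hfl := Int.sub_one_lt_floor (t / r n)
      have hfl2 := Int.floor_le (t / r n)
      have ht : (t / r n) * r n = t := div_mul_cancel₀ t (hr0 n).ne'
      have h1 := mul_le_mul_of_nonneg_right hfl2 (hr0 n).le
      have h2 := mul_le_mul_of_nonneg_right hfl.le (hr0 n).le
      rw [ht] at h1
      constructor
      · nlinarith [hr0 n]
      · linarith
    · rw [norm_smul, Real.norm_eq_abs]
  exact hH.mem_of_tendsto hconv (Eventually.of_forall (fun n => hyH n))


-- decomposition in basis (b, I*b)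
lemma decomp (b : ℂ) (hb : b ≠ 0) (h : ℂ) :
    h = (h/b).re • b + (h/b).im • (I*b) := by
  have := Complex.re_add_im (h/b)
  calc h = (h/b) * b := by field_simp
    _ = ((h/b).re + (h/b).im * I) * b := by rw [this]
    _ = (h/b).re • b + (h/b).im • (I*b) := by
        simp only [Complex.real_smul]; ring

lemma indep_pair (b : ℂ) (hb : b ≠ 0) (a : ℝ) (ha : a ≠ 0) :
    LinearIndependent ℝ ![b, a • (I*b)] := by
  rw [LinearIndependent.pair_iff]
  intro s t hst
  have : ((s : ℂ) + t * a * I) * b = 0 := by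
    rw [← hst]
    simp only [Complex.real_smul, smul_smul, Complex.ofReal_mul]
    ring
  have h2 : (s : ℂ) + t * a * I = 0 := by
    rcases mul_eq_zero.1 this with h | h
    · exact h
    · exact absurd h hb
  have hre := congrArg Complex.re h2
  have him := congrArg Complex.im h2
  simp at hre him
  constructor
  · exact hre
  · rcases him with h | h
    · exact h
    · exact absurd h ha

lemma nondiscrete_case (H : AddSubgroup ℂ) (hH : IsClosed (H : Set ℂ))
    (b : ℂ) (hb : b ≠ 0) (hline : ∀ t : ℝ, t • b ∈ H) :
    ((∃ b : ℂ, b ≠ 0 ∧ (H : Set ℂ) = Set.range fun r : ℝ => r • b) ∨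
     (∃ b₁ b₂ : ℂ, LinearIndependent ℝ ![b₁, b₂] ∧
        (H : Set ℂ) = {w : ℂ | ∃ (r : ℝ) (n : ℤ), w = r • b₁ + n • b₂}) ∨
     (H : Set ℂ) = Set.univ) := by
  set c : ℂ := I * b with hc
  set f : ℝ →ₗ[ℝ] ℂ := LinearMap.toSpanSingleton ℝ ℂ c with hf
  set S : AddSubgroup ℝ := H.comap f.toAddMonoidHom with hS
  have hmemS : ∀ t : ℝ, t ∈ S ↔ t • c ∈ H := fun t => Iff.rfl
  have hSclosed : IsClosed (S : Set ℝ) := by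
    have : (S : Set ℝ) = f ⁻¹' (H : Set ℂ) := rfl
    rw [this]
    exact hH.preimage f.continuous_of_finiteDimensional
  -- decomposition of an element of H
  have hdec : ∀ h : ℂ, h ∈ H → (h/b).im ∈ S ∧ h = (h/b).re • b + (h/b).im • c := by
    intro h hh
    have hd := decomp b hb h
    refine ⟨?_, hd⟩
    rw [hmemS]
    have heq : (h/b).im • c = h - (h/b).re • b :=
      eq_sub_iff_add_eq.2 ((add_comm _ _).trans hd.symm)
    rw [heq]
    exact sub_mem hh (hline _)
  rcases AddSubgroup.dense_or_cyclic S with hd | ⟨a, haS⟩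
  · -- S dense and closed → S = ⊤ → H = univ
    right; right
    have hSuniv : (S : Set ℝ) = Set.univ := by
      rw [← hSclosed.closure_eq]; exact hd.closure_eq
    rw [Set.eq_univ_iff_forall]
    intro h
    have h1 : (h/b).re • b ∈ H := hline _
    have h2 : (h/b).im • c ∈ H := by
      rw [← hmemS]
      exact Set.eq_univ_iff_forall.1 hSuniv _
    rw [SetLike.mem_coe, decomp b hb h]
    exact add_mem h1 h2
  · rcases eq_or_ne a 0 with rfl | ha
    · -- S = {0} : line
      left
      refine ⟨b, hb, ?_⟩
      ext h
      constructor
      · intro hh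
        obtain ⟨him, hd⟩ := hdec h hh
        rw [haS] at him
        simp [AddSubgroup.mem_closure_singleton] at him
        refine ⟨(h/b).re, ?_⟩
        show (h/b).re • b = h
        conv_rhs => rw [hd]
        rw [← him, zero_smul, add_zero]
      · rintro ⟨r, rfl⟩
        exact hline r
    · -- S = ℤa : ℝ b + ℤ (a c)
      right; left
      refine ⟨b, a • c, ?_, ?_⟩
      · exact indep_pair b hb a ha
      ext h
      constructor
      · intro hh
        obtain ⟨him, hd⟩ := hdec h hh
        rw [haS, AddSubgroup.mem_closure_singleton] at him
        obtain ⟨n, hn⟩ := him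
        refine ⟨(h/b).re, n, ?_⟩
        conv_lhs => rw [hd]
        rw [← hn]
        rw [smul_assoc]
      · rintro ⟨r, n, rfl⟩
        refine add_mem (hline r) ?_
        have : a ∈ S := by rw [haS]; exact AddSubgroup.mem_closure_singleton_self a
        have han : (n : ℤ) • a ∈ S := zsmul_mem this n
        have hmem := (hmemS _).1 han
        rwa [← smul_assoc]


lemma from_basis (H : AddSubgroup ℂ) (r : ℕ) (hr : r ≤ 2) (v : Fin r → ℂ)
    (hi : LinearIndependent ℝ v)
    (hs : span ℤ (Set.range v) = AddSubgroup.toIntSubmodule H) :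
    (H : Set ℂ) = {0} ∨
     (∃ b : ℂ, b ≠ 0 ∧ (H : Set ℂ) = Set.range fun n : ℤ => n • b) ∨
     (∃ b₁ b₂ : ℂ, LinearIndependent ℝ ![b₁, b₂] ∧
        (H : Set ℂ) = {w : ℂ | ∃ m n : ℤ, w = m • b₁ + n • b₂}) := by
  have hHL : (H : Set ℂ) = ((AddSubgroup.toIntSubmodule H : Submodule ℤ ℂ) : Set ℂ) := rfl
  interval_cases r
  · left
    have h0 : Set.range v = ∅ := Set.range_eq_empty v
    rw [h0, span_empty] at hs
    rw [hHL, ← hs]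
    simp
  · right; left
    refine ⟨v 0, hi.ne_zero 0, ?_⟩
    have h0 : Set.range v = {v 0} := by
      rw [Set.range_unique]
      rfl
    rw [h0] at hs
    ext x
    rw [hHL, SetLike.mem_coe, ← hs, mem_span_singleton]
    simp [eq_comm]
  · right; right
    refine ⟨v 0, v 1, ?_, ?_⟩
    · have hv2 : ![v 0, v 1] = v := by
        funext i
        fin_cases i <;> rfl
      rwa [hv2]
    have h0 : Set.range v = {v 0, v 1} := by
      ext y
      constructor
      · rintro ⟨i, rfl⟩
        fin_cases i <;> simp
      · rintro (rfl | rfl)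
        exacts [⟨0, rfl⟩, ⟨1, rfl⟩]
    rw [h0] at hs
    ext x
    rw [hHL, SetLike.mem_coe, ← hs, mem_span_pair]
    constructor
    · rintro ⟨m, n, rfl⟩; exact ⟨m, n, rfl⟩
    · rintro ⟨m, n, rfl⟩; exact ⟨m, n, rfl⟩


lemma discrete_case (H : AddSubgroup ℂ) (hd : DiscreteTopology H) :
    (H : Set ℂ) = {0} ∨
     (∃ b : ℂ, b ≠ 0 ∧ (H : Set ℂ) = Set.range fun n : ℤ => n • b) ∨
     (∃ b₁ b₂ : ℂ, LinearIndependent ℝ ![b₁, b₂] ∧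
        (H : Set ℂ) = {w : ℂ | ∃ m n : ℤ, w = m • b₁ + n • b₂}) := by
  set L : Submodule ℤ ℂ := AddSubgroup.toIntSubmodule H with hL
  have hdL : DiscreteTopology L := hd
  set F : Submodule ℝ ℂ := span ℝ (L : Set ℂ) with hF
  set f : F →ₗ[ℝ] ℂ := F.subtype with hf
  set L₀ : Submodule ℤ F := L.comap (f.restrictScalars ℤ) with hL₀
  have h_img : f '' L₀ = L := by
    rw [← LinearMap.coe_restrictScalars ℤ f, ← Submodule.map_coe (f.restrictScalars ℤ),
      Submodule.map_comap_eq_self]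
    exact fun x hx ↦ LinearMap.mem_range.mpr ⟨⟨x, Submodule.subset_span hx⟩, rfl⟩
  have hdL₀ : DiscreteTopology L₀ := by
    refine DiscreteTopology.preimage_of_continuous_injective (L : Set ℂ) ?_ (injective_subtype _)
    exact LinearMap.continuous_of_finiteDimensional f
  have hZL : IsZLattice ℝ L₀ := ⟨by
    rw [← (Submodule.map_injective_of_injective (injective_subtype _)).eq_iff, Submodule.map_span,
      Submodule.map_top, range_subtype, h_img]⟩
  have : Module.Finite ℤ L₀ := ZLattice.module_finite ℝ L₀
  have : Module.Free ℤ L₀ := ZLattice.module_free ℝ L₀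
  have hrank : finrank ℤ L₀ = finrank ℝ F := ZLattice.rank ℝ L₀
  have hFle : finrank ℝ F ≤ 2 := by
    have := Submodule.finrank_le F
    simpa [Complex.finrank_real_complex] using this
  set r := finrank ℤ L₀ with hrdef
  have hcard : Fintype.card (Free.ChooseBasisIndex ℤ L₀) = r :=
    (finrank_eq_card_chooseBasisIndex ℤ L₀).symm
  let b₀ : Basis (Fin r) ℤ L₀ :=
    (Free.chooseBasis ℤ L₀).reindex (Fintype.equivFinOfCardEq hcard)
  set v : Fin r → ℂ := fun i => ((b₀ i : F) : ℂ) with hv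
  -- linear independence over ℝ
  have hindep : LinearIndependent ℝ v := by
    have h1 := (Basis.ofZLatticeBasis ℝ L₀ b₀).linearIndependent
    have h2 := h1.map' f (LinearMap.ker_eq_bot.2 (injective_subtype F))
    have : (f ∘ (Basis.ofZLatticeBasis ℝ L₀ b₀)) = v := by
      funext i
      simp only [hv, Function.comp_apply, Basis.ofZLatticeBasis_apply]
      rfl
    rwa [← this]
  -- span
  have hspan : span ℤ (Set.range v) = L := by
    have h1 := Basis.ofZLatticeBasis_span ℝ L₀ (b := b₀)
    have h2 : Set.range v
        = (f.restrictScalars ℤ) '' (Set.range (Basis.ofZLatticeBasis ℝ L₀ b₀)) := by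
      rw [← Set.range_comp]
      refine congrArg Set.range (funext fun i => ?_)
      simp only [hv, Function.comp_apply, LinearMap.coe_restrictScalars,
        Basis.ofZLatticeBasis_apply]
      rfl
    rw [h2, ← Submodule.map_span, h1]
    exact SetLike.ext' h_img
  exact from_basis H r (hrank ▸ hFle) v hindep hspan


/-- Classification of the closed additive subgroups of `ℂ ≅ ℝ²`: every closed additive
subgroup `H` of `ℂ` is `{0}`, infinite cyclic `ℤ b` with `b ≠ 0`, a line `ℝ b` with
`b ≠ 0`, a lattice `ℤ b₁ + ℤ b₂` with `b₁, b₂` `ℝ`-linearly independent,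
`ℝ b₁ + ℤ b₂` with `b₁, b₂` independent, or all of `ℂ`. In particular, if `H` is
discrete then it is `{0}`, `ℤ b`, or a lattice. -/
theorem stmt16 (H : AddSubgroup ℂ) (hH : IsClosed (H : Set ℂ)) :
    ((H : Set ℂ) = {0} ∨
     (∃ b : ℂ, b ≠ 0 ∧ (H : Set ℂ) = Set.range fun n : ℤ => n • b) ∨
     (∃ b : ℂ, b ≠ 0 ∧ (H : Set ℂ) = Set.range fun r : ℝ => r • b) ∨
     (∃ b₁ b₂ : ℂ, LinearIndependent ℝ ![b₁, b₂] ∧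
        (H : Set ℂ) = {w : ℂ | ∃ m n : ℤ, w = m • b₁ + n • b₂}) ∨
     (∃ b₁ b₂ : ℂ, LinearIndependent ℝ ![b₁, b₂] ∧
        (H : Set ℂ) = {w : ℂ | ∃ (r : ℝ) (n : ℤ), w = r • b₁ + n • b₂}) ∨
     (H : Set ℂ) = Set.univ) ∧
    (DiscreteTopology H →
      ((H : Set ℂ) = {0} ∨
       (∃ b : ℂ, b ≠ 0 ∧ (H : Set ℂ) = Set.range fun n : ℤ => n • b) ∨
       (∃ b₁ b₂ : ℂ, LinearIndependent ℝ ![b₁, b₂] ∧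
          (H : Set ℂ) = {w : ℂ | ∃ m n : ℤ, w = m • b₁ + n • b₂}))) := by
  constructor
  · by_cases hd : DiscreteTopology H
    · rcases discrete_case H hd with h | h | h
      · exact Or.inl h
      · exact Or.inr (Or.inl h)
      · exact Or.inr (Or.inr (Or.inr (Or.inl h)))
    · obtain ⟨u, hu0, hline⟩ := line_mem H hH (small_elts H hd)
      rcases nondiscrete_case H hH u hu0 hline with h | h | h
      · exact Or.inr (Or.inr (Or.inl h))
      · exact Or.inr (Or.inr (Or.inr (Or.inr (Or.inl h))))
      · exact Or.inr (Or.inr (Or.inr (Or.inr (Or.inr h))))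
  · exact discrete_case H
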